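/- Let w > 1 be a real number and let b ≥ 1 be a natural number. Let p be the unique positive integer with 2^{p−1} ≤ w < 2^p and set x̂₀ = 2^{−p}. Define recursively x̂_i = trunc_b(−w·x̂_{i−1}² + 2·x̂_{i−1}) for i ≥ 1, and let s = ⌈log₂ b⌉. Then |x̂_s − 1/w| ≤ (2 + log₂ b)/2^b. -/

import Mathlib

/-- Truncation of a real number to `b` bits after the binary point:
`trunc b y = ⌊2^b * y⌋ / 2^b`. -/
noncomputable def trunc (b : ℕ) (y : ℝ) : ℝ := (⌊(2:ℝ)^b * y⌋ : ℝ) / 2^b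

private lemma trunc_le' (b : ℕ) (y : ℝ) : trunc b y ≤ y := by
  have h : (0:ℝ) < 2^b := by positivity
  rw [trunc, div_le_iff₀ h, mul_comm y]
  exact Int.floor_le _

private lemma lt_trunc_add' (b : ℕ) (y : ℝ) : y < trunc b y + 1/2^b := by
  have h : (0:ℝ) < 2^b := by positivity
  rw [trunc, ← add_div, lt_div_iff₀ h, mul_comm]
  exact Int.lt_floor_add_one _

private lemma trunc_nonneg' (b : ℕ) {y : ℝ} (hy : 0 ≤ y) : 0 ≤ trunc b y := by
  have h1 : (0:ℝ) ≤ (⌊(2:ℝ)^b * y⌋ : ℝ) := by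
    exact_mod_cast Int.floor_nonneg.mpr (by positivity)
  exact div_nonneg h1 (by positivity)

private lemma two_mul_succ_le' (i : ℕ) (hi : 1 ≤ i) : 2*(i+1) ≤ 2^(2^i) := by
  induction i with
  | zero => omega
  | succ n ih =>
    rcases Nat.lt_or_ge n 1 with h | h
    · have hn : n = 0 := by omega
      subst hn; norm_num
    · have ihn := ih h
      have h1 : 2^(2^(n+1)) = (2^(2^n))^2 := by
        rw [← pow_mul, pow_succ]
      rw [h1]
      calc 2*(n+1+1) ≤ (2*(n+1))^2 := by nlinarith
      _ ≤ (2^(2^n))^2 := Nat.pow_le_pow_left ihn 2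

private lemma inv_step' (w : ℝ) (hw : 1 < w) (b i : ℕ) (x : ℝ)
    (hx0 : 0 ≤ x) (hx1 : x ≤ 1/w)
    (he : 1/w - x ≤ 1/((2:ℝ)^(2^i) * w) + (i:ℝ) / 2^b) :
    0 ≤ trunc b (-w*x^2 + 2*x) ∧ trunc b (-w*x^2 + 2*x) ≤ 1/w ∧
      1/w - trunc b (-w*x^2 + 2*x) ≤ 1/((2:ℝ)^(2^(i+1)) * w) + ((i:ℝ)+1)/2^b := by
  have hw0 : (0:ℝ) < w := by linarith
  have hb0 : (0:ℝ) < 2^b := by positivity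
  set E : ℝ := (2:ℝ)^(2^i) with hE
  have hE0 : (0:ℝ) < E := by positivity
  have hE2 : (2:ℝ) ≤ E := by
    rw [hE]
    calc (2:ℝ) = 2^1 := (pow_one 2).symm
    _ ≤ 2^(2^i) := pow_le_pow_right₀ one_le_two Nat.one_le_two_pow
  have hE' : (2:ℝ)^(2^(i+1)) = E^2 := by
    rw [hE, ← pow_mul, pow_succ]
  have hwx : w * x ≤ 1 := by
    rw [mul_comm]; exact (le_div_iff₀ hw0).mp hx1
  have hy0 : 0 ≤ -w*x^2 + 2*x := by
    nlinarith [mul_nonneg hx0 (by linarith : (0:ℝ) ≤ 2 - w*x)]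
  have hyid : 1/w - (-w*x^2 + 2*x) = w * (1/w - x)^2 := by
    field_simp; ring
  have hy1 : -w*x^2 + 2*x ≤ 1/w := by
    have := mul_nonneg hw0.le (sq_nonneg (1/w - x))
    linarith [hyid]
  have ht0 : 0 ≤ trunc b (-w*x^2 + 2*x) := trunc_nonneg' b hy0
  have ht1 : trunc b (-w*x^2 + 2*x) ≤ 1/w := le_trans (trunc_le' b _) hy1
  refine ⟨ht0, ht1, ?_⟩
  have htd := lt_trunc_add' b (-w*x^2 + 2*x)
  have hkey : 1/w - trunc b (-w*x^2 + 2*x) ≤ w * (1/w - x)^2 + 1/2^b := by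
    linarith [hyid, htd]
  have he0 : 0 ≤ 1/w - x := by linarith
  rw [hE']
  by_cases hc : 2 * (2:ℝ)^b + E * (w * i) ≤ E * 2^b
  · -- main Newton branch
    have hM : w * (1/w - x)^2 ≤ w * (1/(E*w) + (i:ℝ)/2^b)^2 :=
      mul_le_mul_of_nonneg_left (pow_le_pow_left₀ he0 he 2) hw0.le
    have hiB : (0:ℝ) ≤ (i:ℝ)/2^b := by positivity
    have hdiff : 1/(E^2*w) + ((i:ℝ)+1)/2^b - (w * (1/(E*w) + (i:ℝ)/2^b)^2 + 1/2^b)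
        = ((i:ℝ)/2^b) * ((E*2^b - (2*2^b + E*(w*(i:ℝ))))/(E*2^b)) := by
      field_simp
      ring
    have hnn : (0:ℝ) ≤ ((i:ℝ)/2^b) * ((E*2^b - (2*2^b + E*(w*(i:ℝ))))/(E*2^b)) :=
      mul_nonneg hiB (div_nonneg (by linarith) (by positivity))
    linarith [hkey, hM, hdiff, hnn]
  · -- w is large, 1/w itself is below the bound
    push_neg at hc
    have hi1 : 1 ≤ i := by
      by_contra hcon
      push_neg at hcon
      have hi0 : i = 0 := by omega
      subst hi0
      simp only [Nat.cast_zero, mul_zero] at hc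
      nlinarith
    have hEi : 2*((i:ℝ)+1) ≤ E := by
      rw [hE]
      exact_mod_cast two_mul_succ_le' i hi1
    have hiR : (1:ℝ) ≤ (i:ℝ) := by exact_mod_cast hi1
    have hw2b : (2:ℝ)^b ≤ w*((i:ℝ)+1) := by
      nlinarith [mul_lt_mul_of_pos_right hc (by linarith : (0:ℝ) < (i:ℝ)+1),
        mul_nonneg (by linarith : (0:ℝ) ≤ E - 2*((i:ℝ)+1)) hb0.le,
        mul_pos hE0 (by linarith : (0:ℝ) < (i:ℝ))]
    have h1w : 1/w ≤ ((i:ℝ)+1)/2^b := by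
      rw [div_le_div_iff₀ hw0 hb0]
      linarith
    have hpos : (0:ℝ) ≤ 1/(E^2*w) := by positivity
    linarith [ht0]

/-- Error analysis of Algorithm INV: Newton's iteration for the reciprocal `1/w`,
with each intermediate result truncated to `b` fractional bits. -/
theorem stmt0 (w : ℝ) (hw : 1 < w) (b : ℕ) (hb : 1 ≤ b)
    (p : ℕ) (hp : 1 ≤ p) (hp1 : (2:ℝ)^(p-1) ≤ w) (hp2 : w < 2^p)
    (xhat : ℕ → ℝ) (hx0 : xhat 0 = (2:ℝ)^(-(p:ℤ)))
    (hxrec : ∀ i : ℕ, xhat (i+1) = trunc b (-w * (xhat i)^2 + 2 * xhat i)) :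
    |xhat ⌈Real.logb 2 b⌉₊ - 1/w| ≤ (2 + Real.logb 2 b) / 2^b := by
  have hw0 : (0:ℝ) < w := lt_trans one_pos hw
  have hb0 : (0:ℝ) < 2^b := by positivity
  have hinv : ∀ i : ℕ, 0 ≤ xhat i ∧ xhat i ≤ 1/w ∧
      1/w - xhat i ≤ 1/((2:ℝ)^(2^i)*w) + (i:ℝ)/2^b := by
    intro i
    induction i with
    | zero =>
      rw [hx0]
      have hxv : (2:ℝ)^(-(p:ℤ)) = ((2:ℝ)^p)⁻¹ := by
        rw [zpow_neg, zpow_natCast]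
      rw [hxv]
      have hp0 : (0:ℝ) < 2^p := by positivity
      have h2p : (2:ℝ)^p ≤ 2*w := by
        have hps : p - 1 + 1 = p := Nat.succ_pred_eq_of_pos hp
        calc (2:ℝ)^p = 2^(p-1) * 2 := by rw [← pow_succ, hps]
        _ ≤ w * 2 := by nlinarith
        _ = 2*w := mul_comm _ _
      refine ⟨by positivity, ?_, ?_⟩
      · rw [one_div]
        exact inv_anti₀ hw0 hp2.le
      · have key : 1/w - ((2:ℝ)^p)⁻¹ ≤ 1/(2*w) := by
          have e1 : 1/w - ((2:ℝ)^p)⁻¹ = (2^p - w)/(w * 2^p) := by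
            field_simp
          rw [e1, div_le_div_iff₀ (by positivity) (by positivity)]
          nlinarith [mul_nonneg hw0.le (by linarith : (0:ℝ) ≤ 2*w - 2^p)]
        simp only [pow_zero, pow_one, Nat.cast_zero, zero_div, add_zero]
        exact key
    | succ n ih =>
      obtain ⟨h0, h1, h2⟩ := ih
      have h := inv_step' w hw b n (xhat n) h0 h1 h2
      rw [hxrec n]
      refine ⟨h.1, h.2.1, ?_⟩
      push_cast
      exact h.2.2
  set s := ⌈Real.logb 2 (b:ℝ)⌉₊ with hs
  obtain ⟨h0, h1, h2⟩ := hinv s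
  have hb1 : (1:ℝ) ≤ (b:ℝ) := by exact_mod_cast hb
  have hlog0 : 0 ≤ Real.logb 2 (b:ℝ) := Real.logb_nonneg one_lt_two hb1
  have hbs : b ≤ 2^s := by
    have h1' : Real.logb 2 (b:ℝ) ≤ (s:ℝ) := Nat.le_ceil _
    have h2' : (b:ℝ) ≤ (2:ℝ)^(s:ℝ) := by
      calc (b:ℝ) = (2:ℝ)^(Real.logb 2 (b:ℝ)) :=
        (Real.rpow_logb two_pos (by norm_num) (by linarith)).symm
      _ ≤ (2:ℝ)^(s:ℝ) := Real.rpow_le_rpow_of_exponent_le one_le_two h1'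
    rw [Real.rpow_natCast] at h2'
    exact_mod_cast h2'
  have hpow1 : (2:ℝ)^b ≤ (2:ℝ)^(2^s) := pow_le_pow_right₀ one_le_two hbs
  have hA : 1/((2:ℝ)^(2^s)*w) ≤ 1/2^b := by
    apply one_div_le_one_div_of_le hb0
    nlinarith [hpow1, hw0, hb0]
  have hsle : (s:ℝ) ≤ Real.logb 2 (b:ℝ) + 1 := le_of_lt (Nat.ceil_lt_add_one hlog0)
  have habs : |xhat s - 1/w| = 1/w - xhat s := by
    rw [abs_of_nonpos (by linarith)]; ring
  rw [habs]
  have hsdiv : (s:ℝ)/2^b ≤ (Real.logb 2 (b:ℝ) + 1)/2^b := by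
    rw [div_le_div_iff₀ hb0 hb0]
    nlinarith [hsle, hb0]
  calc 1/w - xhat s ≤ 1/((2:ℝ)^(2^s)*w) + (s:ℝ)/2^b := h2
  _ ≤ 1/2^b + (Real.logb 2 (b:ℝ) + 1)/2^b := add_le_add hA hsdiv
  _ = (2 + Real.logb 2 (b:ℝ))/2^b := by ring
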